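/- Let Δ_A be a coordinate subspace of F_{q^m} of dimension |A| and let L = Δ_A + u(Δ_B \ Δ_{B'}) ⊆ F_{q^m}[u]/(u²) with B' ⊂ B ⊆ [m], |A| + |B'| > 0. The trace code C_L = {(Tr((a+ub)z))_{z∈L} : a + ub ∈ F_{q^m}[u]/(u²)} has length q^{|A|}(q^{|B|} − q^{|B'|}) and exactly q^{|A| + |A∪B|} distinct codewords. -/

import Mathlib

open scoped Classical

/-- The ring trace `Tr : K + uK → F + uF`, `Tr(a + ub) = Tr_{K/F}(a) + u·Tr_{K/F}(b)`,
with `F[u]/(u²)` realized as `DualNumber`. -/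
noncomputable def ringTrace (F : Type*) {K : Type*} [Field F] [Field K] [Algebra F K]
    (w : DualNumber K) : DualNumber F :=
  TrivSqZeroExt.inl (Algebra.trace F K w.fst) + TrivSqZeroExt.inr (Algebra.trace F K w.snd)

private lemma auxFinrankSpan {F K : Type*} [Field F] [Field K] [Algebra F K]
    {m : ℕ} (bas : Module.Basis (Fin m) F K) (S : Finset (Fin m)) :
    Module.finrank F (Submodule.span F (bas '' (S : Set (Fin m)))) = S.card := by
  classical
  have hli : LinearIndependent F ((↑) : (bas '' (S : Set (Fin m))) → K) :=
    LinearIndepOn.id_image (s := (S : Set (Fin m)))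
      (bas.linearIndependent.comp _ Subtype.val_injective)
  rw [finrank_span_set_eq_card hli]
  rw [Set.toFinset_image, Finset.toFinset_coe, Finset.card_image_of_injective _ bas.injective]

private lemma auxCardSpan {F K : Type*} [Field F] [Fintype F] [Field K] [Fintype K] [Algebra F K]
    {m : ℕ} (bas : Module.Basis (Fin m) F K) (S : Finset (Fin m)) :
    Nat.card (Submodule.span F (bas '' S)) = Fintype.card F ^ S.card := by
  rw [Nat.card_eq_fintype_card, Module.card_eq_pow_finrank (K := F), auxFinrankSpan bas S]

private lemma auxCardOrth {F K : Type*} [Field F] [Fintype F] [Field K] [Fintype K] [Algebra F K]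
    (W : Submodule F K) :
    Nat.card {a : K // ∀ x ∈ W, Algebra.trace F K (a * x) = 0} =
      Fintype.card F ^ (Module.finrank F K - Module.finrank F W) := by
  classical
  set f : K →ₗ[F] Module.Dual F W := W.subtype.dualMap ∘ₗ (Algebra.traceForm F K) with hf
  have hsurj : Function.Surjective f := by
    apply Function.Surjective.comp (LinearMap.dualMap_surjective_of_injective W.injective_subtype)
    have hnd := traceForm_nondegenerate F K
    intro φ
    exact ⟨((Algebra.traceForm F K).toDual hnd).symm φ, by
      ext x
      exact LinearMap.BilinForm.apply_toDual_symm_apply (hB := hnd) φ x⟩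
  have hker : ∀ a : K, a ∈ LinearMap.ker f ↔ ∀ x ∈ W, Algebra.trace F K (a * x) = 0 := by
    intro a
    simp only [LinearMap.mem_ker, hf, LinearMap.comp_apply, LinearMap.ext_iff]
    constructor
    · intro h x hx; simpa [Algebra.traceForm_apply] using h ⟨x, hx⟩
    · intro h x; simpa [Algebra.traceForm_apply] using h x.1 x.2
  have hcard := Submodule.card_eq_card_quotient_mul_card (LinearMap.ker f)
  have hquot : Nat.card (K ⧸ LinearMap.ker f) = Fintype.card F ^ Module.finrank F W := by
    rw [Nat.card_congr (f.quotKerEquivOfSurjective hsurj).toEquiv,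
      Nat.card_congr (Module.finBasis F W).toDualEquiv.toEquiv.symm,
      Nat.card_eq_fintype_card, Module.card_eq_pow_finrank (K := F)]
  have hK : Nat.card K = Fintype.card F ^ Module.finrank F K := by
    rw [Nat.card_eq_fintype_card, Module.card_eq_pow_finrank (K := F)]
  have hle : Module.finrank F W ≤ Module.finrank F K := W.finrank_le
  have hpow : Fintype.card F ^ (Module.finrank F K - Module.finrank F W) *
      Fintype.card F ^ Module.finrank F W = Fintype.card F ^ Module.finrank F K := by
    rw [← pow_add, Nat.sub_add_cancel hle]
  have heq : Nat.card {a : K // ∀ x ∈ W, Algebra.trace F K (a * x) = 0}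
      = Nat.card (LinearMap.ker f) :=
    Nat.card_congr (Equiv.subtypeEquivRight fun a => (hker a).symm)
  rw [heq]
  apply Nat.eq_of_mul_eq_mul_right (pow_pos (@Fintype.card_pos F _ ⟨1⟩) (Module.finrank F W))
  rw [hpow, ← hK, hcard, hquot]

private lemma auxKerRange {M N : Type*} [AddCommGroup M] [AddCommGroup N] (f : M →+ N) :
    Nat.card f.ker * Nat.card f.range = Nat.card M := by
  have h1 : Nat.card (M ⧸ f.ker) = Nat.card f.range :=
    Nat.card_congr (QuotientAddGroup.quotientKerEquivRange f).toEquiv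
  rw [AddSubgroup.card_eq_card_quotient_mul_card_addSubgroup f.ker, h1, mul_comm]

theorem stmt19 {F K : Type*} [Field F] [Fintype F] [Field K] [Fintype K] [Algebra F K]
    (m : ℕ) (hm : Module.finrank F K = m) (bas : Module.Basis (Fin m) F K)
    (A B B' : Finset (Fin m)) (hBB : B' ⊂ B) (hpos : 0 < A.card + B'.card)
    (L : Set (DualNumber K))
    (hL : L = {z : DualNumber K | z.fst ∈ Submodule.span F (bas '' A) ∧
        z.snd ∈ ((Submodule.span F (bas '' B) : Set K) \
          (Submodule.span F (bas '' B') : Set K))}) :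
    Nat.card L = Fintype.card F ^ A.card *
        (Fintype.card F ^ B.card - Fintype.card F ^ B'.card) ∧
    Nat.card {c : L → DualNumber F // ∃ a b : K,
        c = fun z => ringTrace F
          ((TrivSqZeroExt.inl a + TrivSqZeroExt.inr b) * z.val)} =
      Fintype.card F ^ (A.card + (A ∪ B).card) := by
  classical
  have hq0 : 0 < Fintype.card F := @Fintype.card_pos F _ ⟨1⟩
  have hsubBB : Submodule.span F (bas '' (B' : Set (Fin m))) ≤
      Submodule.span F (bas '' (B : Set (Fin m))) :=
    Submodule.span_mono (Set.image_mono (Finset.coe_subset.mpr hBB.subset))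
  -- Part 1
  have part1 : Nat.card L = Fintype.card F ^ A.card *
      (Fintype.card F ^ B.card - Fintype.card F ^ B'.card) := by
    have hprod : L = (Submodule.span F (bas '' (A : Set (Fin m))) : Set K) ×ˢ
        ((Submodule.span F (bas '' (B : Set (Fin m))) : Set K) \
          (Submodule.span F (bas '' (B' : Set (Fin m))) : Set K)) := by
      rw [hL]; rfl
    rw [Nat.card_congr ((Equiv.setCongr hprod).trans (Equiv.Set.prod (α := K) (β := K) _ _)),
      Nat.card_prod]
    congr 1
    · rw [SetLike.coe_sort_coe, auxCardSpan bas A]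
    · rw [Nat.card_coe_set_eq, Set.ncard_diff (by exact_mod_cast hsubBB)]
      congr 1
      · rw [← Nat.card_coe_set_eq, SetLike.coe_sort_coe, auxCardSpan bas B]
      · rw [← Nat.card_coe_set_eq, SetLike.coe_sort_coe, auxCardSpan bas B']
  refine ⟨part1, ?_⟩
  -- Part 2
  -- value of the codeword map
  have hg : ∀ (a b : K) (z : DualNumber K),
      ringTrace F ((TrivSqZeroExt.inl a + TrivSqZeroExt.inr b) * z) =
        TrivSqZeroExt.inl (Algebra.trace F K (a * z.fst)) +
          TrivSqZeroExt.inr (Algebra.trace F K (a * z.snd + b * z.fst)) := by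
    intro a b z
    apply TrivSqZeroExt.ext <;> simp [ringTrace, mul_comm] <;> rw [add_comm]
  let g : (K × K) →+ (L → DualNumber F) :=
  { toFun := fun p => fun z => ringTrace F
      ((TrivSqZeroExt.inl p.1 + TrivSqZeroExt.inr p.2) * z.val)
    map_zero' := by
      funext z
      show ringTrace F ((TrivSqZeroExt.inl (0 : K) + TrivSqZeroExt.inr (0 : K)) * z.val) = 0
      rw [hg]
      apply TrivSqZeroExt.ext <;> simp
    map_add' := by
      rintro ⟨a, b⟩ ⟨a', b'⟩
      funext z
      show ringTrace F _ = ringTrace F _ + ringTrace F _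
      rw [hg, hg, hg]
      apply TrivSqZeroExt.ext <;> simp [add_mul, map_add] <;> ring }
  have hcode : Nat.card {c : L → DualNumber F // ∃ a b : K,
      c = fun z => ringTrace F
        ((TrivSqZeroExt.inl a + TrivSqZeroExt.inr b) * z.val)} = Nat.card g.range := by
    apply Nat.card_congr
    apply Equiv.subtypeEquivRight
    intro c
    constructor
    · rintro ⟨a, b, rfl⟩; exact ⟨(a, b), rfl⟩
    · rintro ⟨⟨a, b⟩, rfl⟩; exact ⟨a, b, rfl⟩
  -- membership helper
  have hmem : ∀ x y : K, x ∈ Submodule.span F (bas '' (A : Set (Fin m))) →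
      y ∈ Submodule.span F (bas '' (B : Set (Fin m))) →
      y ∉ Submodule.span F (bas '' (B' : Set (Fin m))) →
      (TrivSqZeroExt.inl x + TrivSqZeroExt.inr y : DualNumber K) ∈ L := by
    intro x y hx hy hy'
    rw [hL]
    refine ⟨by simpa using hx, ?_⟩
    simp only [TrivSqZeroExt.snd_add, TrivSqZeroExt.snd_inl, TrivSqZeroExt.snd_inr, zero_add]
    exact ⟨hy, hy'⟩
  -- a point of W_B not in W_B'
  have hne : Submodule.span F (bas '' (B' : Set (Fin m))) ≠
      Submodule.span F (bas '' (B : Set (Fin m))) := by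
    intro h
    have h1 := auxFinrankSpan bas B'
    rw [h, auxFinrankSpan bas B] at h1
    exact absurd h1.symm (Nat.ne_of_lt (Finset.card_lt_card hBB))
  obtain ⟨y0, hy0B, hy0B'⟩ := SetLike.exists_of_lt (lt_of_le_of_ne hsubBB hne)
  have hsup : Submodule.span F (bas '' ((A ∪ B : Finset (Fin m)) : Set (Fin m))) =
      Submodule.span F (bas '' (A : Set (Fin m))) ⊔
        Submodule.span F (bas '' (B : Set (Fin m))) := by
    rw [Finset.coe_union, Set.image_union, Submodule.span_union]
  -- kernel characterization
  have hker : ∀ p : K × K, p ∈ g.ker ↔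
      ((∀ x ∈ Submodule.span F (bas '' ((A ∪ B : Finset (Fin m)) : Set (Fin m))),
          Algebra.trace F K (p.1 * x) = 0) ∧
       (∀ x ∈ Submodule.span F (bas '' (A : Set (Fin m))),
          Algebra.trace F K (p.2 * x) = 0)) := by
    rintro ⟨a, b⟩
    rw [AddMonoidHom.mem_ker]
    constructor
    · intro h
      have hz : ∀ z : DualNumber K, z ∈ L →
          Algebra.trace F K (a * z.fst) = 0 ∧
            Algebra.trace F K (a * z.snd + b * z.fst) = 0 := by
        intro z hzL
        have h2 := congrFun h ⟨z, hzL⟩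
        show _ ∧ _
        rw [show (g (a, b)) ⟨z, hzL⟩ = ringTrace F
            ((TrivSqZeroExt.inl a + TrivSqZeroExt.inr b) * z) from rfl, hg] at h2
        constructor
        · simpa using congrArg TrivSqZeroExt.fst h2
        · simpa using congrArg TrivSqZeroExt.snd h2
      have hay0 : Algebra.trace F K (a * y0) = 0 := by
        simpa using (hz _ (hmem 0 y0 (zero_mem _) hy0B hy0B')).2
      have hAa : ∀ x ∈ Submodule.span F (bas '' (A : Set (Fin m))),
          Algebra.trace F K (a * x) = 0 := by
        intro x hx
        simpa using (hz _ (hmem x y0 hx hy0B hy0B')).1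
      have hAb : ∀ x ∈ Submodule.span F (bas '' (A : Set (Fin m))),
          Algebra.trace F K (b * x) = 0 := by
        intro x hx
        have h3 := (hz _ (hmem x y0 hx hy0B hy0B')).2
        have h4 : Algebra.trace F K (a * y0) + Algebra.trace F K (b * x) = 0 := by
          simpa [map_add] using h3
        rwa [hay0, zero_add] at h4
      have hBa : ∀ y ∈ Submodule.span F (bas '' (B : Set (Fin m))),
          Algebra.trace F K (a * y) = 0 := by
        intro y hy
        by_cases hy' : y ∈ Submodule.span F (bas '' (B' : Set (Fin m)))
        · have hmem2 : y0 + y ∈ Submodule.span F (bas '' (B : Set (Fin m))) :=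
            add_mem hy0B hy
          have hnot : y0 + y ∉ Submodule.span F (bas '' (B' : Set (Fin m))) := fun hc =>
            hy0B' (by simpa using sub_mem hc hy')
          have h3 := (hz _ (hmem 0 (y0 + y) (zero_mem _) hmem2 hnot)).2
          have h4 : Algebra.trace F K (a * y0) + Algebra.trace F K (a * y) = 0 := by
            simpa [mul_add, map_add] using h3
          rwa [hay0, zero_add] at h4
        · simpa using (hz _ (hmem 0 y (zero_mem _) hy hy')).2
      refine ⟨?_, hAb⟩
      intro x hx
      rw [hsup] at hx
      obtain ⟨u, hu, v, hv, rfl⟩ := Submodule.mem_sup.mp hx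
      rw [mul_add, map_add, hAa u hu, hBa v hv, add_zero]
    · rintro ⟨h1, h2⟩
      funext z
      obtain ⟨z, hzL⟩ := z
      have hz1 : z.fst ∈ Submodule.span F (bas '' (A : Set (Fin m))) := by
        rw [hL] at hzL; exact hzL.1
      have hz2 : z.snd ∈ Submodule.span F (bas '' (B : Set (Fin m))) := by
        rw [hL] at hzL; exact hzL.2.1
      have hsA : Submodule.span F (bas '' (A : Set (Fin m))) ≤
          Submodule.span F (bas '' ((A ∪ B : Finset (Fin m)) : Set (Fin m))) := by
        rw [hsup]; exact le_sup_left
      have hsB : Submodule.span F (bas '' (B : Set (Fin m))) ≤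
          Submodule.span F (bas '' ((A ∪ B : Finset (Fin m)) : Set (Fin m))) := by
        rw [hsup]; exact le_sup_right
      show ringTrace F ((TrivSqZeroExt.inl a + TrivSqZeroExt.inr b) * z) = 0
      rw [hg]
      apply TrivSqZeroExt.ext <;>
        simp [h1 _ (hsA hz1), map_add, h1 _ (hsB hz2), h2 _ hz1]
  -- kernel cardinality
  have hkercard : Nat.card g.ker =
      Fintype.card F ^ (m - (A ∪ B).card) * Fintype.card F ^ (m - A.card) := by
    have e : g.ker ≃
        {a : K // ∀ x ∈ Submodule.span F (bas '' ((A ∪ B : Finset (Fin m)) : Set (Fin m))),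
            Algebra.trace F K (a * x) = 0} ×
        {b : K // ∀ x ∈ Submodule.span F (bas '' (A : Set (Fin m))),
            Algebra.trace F K (b * x) = 0} :=
      (Equiv.subtypeEquivRight hker).trans (Equiv.subtypeProdEquivProd
        (p := fun a : K => ∀ x ∈ Submodule.span F
            (bas '' ((A ∪ B : Finset (Fin m)) : Set (Fin m))), Algebra.trace F K (a * x) = 0)
        (q := fun b : K => ∀ x ∈ Submodule.span F (bas '' (A : Set (Fin m))),
            Algebra.trace F K (b * x) = 0))
    rw [Nat.card_congr e, Nat.card_prod, auxCardOrth, auxCardOrth,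
      auxFinrankSpan bas (A ∪ B), auxFinrankSpan bas A, hm]
  have htot := auxKerRange g
  have hcardKK : Nat.card (K × K) = Fintype.card F ^ m * Fintype.card F ^ m := by
    rw [Nat.card_prod, Nat.card_eq_fintype_card, Module.card_eq_pow_finrank (K := F), hm]
  have hdA : A.card ≤ m := le_trans (Finset.card_le_univ A) (le_of_eq (Fintype.card_fin m))
  have hdAB : (A ∪ B).card ≤ m :=
    le_trans (Finset.card_le_univ (A ∪ B)) (le_of_eq (Fintype.card_fin m))
  rw [hcode]
  apply Nat.eq_of_mul_eq_mul_right
    (mul_pos (pow_pos hq0 (m - (A ∪ B).card)) (pow_pos hq0 (m - A.card)))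
  calc Nat.card g.range *
      (Fintype.card F ^ (m - (A ∪ B).card) * Fintype.card F ^ (m - A.card))
      = Nat.card g.ker * Nat.card g.range := by rw [← hkercard, mul_comm]
    _ = Nat.card (K × K) := htot
    _ = Fintype.card F ^ m * Fintype.card F ^ m := hcardKK
    _ = Fintype.card F ^ (A.card + (A ∪ B).card) *
        (Fintype.card F ^ (m - (A ∪ B).card) * Fintype.card F ^ (m - A.card)) := by
      rw [← pow_add, ← pow_add, ← pow_add]
      congr 1
      omega
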